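/- For every integer d > 0, K ∩ η^d·K·η^{−d} = B·K_d, where B is the subgroup of upper triangular matrices in K. -/

import Mathlib

open Matrix
open scoped Pointwise

noncomputable section

/-- Ambient data for the paper: `E` is the unramified quadratic extension `F(√ε)` of a
nonarchimedean local field `F` of odd residual characteristic.  The field `F` is realized
as the fixed field of the nontrivial `F`-automorphism `σ` of `E`; `ν` is the discrete
valuation of `E` (extending the valuation of `F` normalized by `ν ϖ = 1` at a uniformizer
`ϖ` of `F`, and still surjecting onto `ℤ` since `E/F` is unramified); `q` is the (odd)
cardinality of the residue field of `F` (so `q²` is that of `E`); `ε ∈ O_F^×` is a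
non-square unit and `sqε = √ε` generates `E` over `F`.  The standard facts about the
norm map and squares are included as fields. -/
structure Setting (E : Type*) [Field E] where
  /-- the nontrivial `F`-automorphism of `E`, written `x̄ = σ x` -/
  σ : E →+* E
  σσ : ∀ x, σ (σ x) = x
  σ_ne_id : σ ≠ RingHom.id E
  /-- the valuation (only its values at nonzero elements matter) -/
  ν : E → ℤ
  ν_mul : ∀ {x y : E}, x ≠ 0 → y ≠ 0 → ν (x * y) = ν x + ν y
  ν_add : ∀ {x y : E}, x ≠ 0 → y ≠ 0 → x + y ≠ 0 → min (ν x) (ν y) ≤ ν (x + y)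
  ν_σ : ∀ x, ν (σ x) = ν x
  ν_surj : ∀ n : ℤ, ∃ x : E, x ≠ 0 ∧ ν x = n
  /-- a uniformizer of `F` -/
  ϖ : E
  ϖ_ne_zero : ϖ ≠ 0
  ϖ_fixed : σ ϖ = ϖ
  ν_ϖ : ν ϖ = 1
  /-- the residual cardinality of `F` -/
  q : ℕ
  q_odd : Odd q
  one_lt_q : 1 < q
  /-- a non-square unit of `O_F` -/
  ε : E
  ε_fixed : σ ε = ε
  ε_ne_zero : ε ≠ 0
  ν_ε : ν ε = 0
  ε_nonsquare : ¬ ∃ f : E, σ f = f ∧ f * f = ε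
  /-- a square root `√ε ∈ E` of `ε` -/
  sqε : E
  sqε_sq : sqε * sqε = ε
  sqε_conj : σ sqε = -sqε
  /-- `E = F(√ε)` -/
  generates : ∀ x : E, ∃ a b : E, σ a = a ∧ σ b = b ∧ x = a + b * sqε
  /-- the norm maps `O_E^×` onto `O_F^×` -/
  norm_surj_units : ∀ y : E, σ y = y → y ≠ 0 → ν y = 0 →
    ∃ x : E, x ≠ 0 ∧ ν x = 0 ∧ x * σ x = y
  /-- the norm maps `1 + p_E^d` onto `1 + p_F^d` for every `d ≥ 1` -/
  norm_surj_one_add : ∀ d : ℤ, 1 ≤ d → ∀ y : E, σ y = y → (y - 1 = 0 ∨ d ≤ ν (y - 1)) →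
    ∃ x : E, (x - 1 = 0 ∨ d ≤ ν (x - 1)) ∧ x * σ x = y
  /-- the residue field of `F` has `q` elements -/
  residue_F : ∃ R : Finset E, R.card = q ∧ (∀ r ∈ R, σ r = r ∧ (r = 0 ∨ 0 ≤ ν r)) ∧
    ∀ x : E, σ x = x → (x = 0 ∨ 0 ≤ ν x) →
      ∃! r, r ∈ R ∧ (x - r = 0 ∨ 1 ≤ ν (x - r))
  /-- the residue field of `E` has `q²` elements -/
  residue_E : ∃ R : Finset E, R.card = q ^ 2 ∧ (∀ r ∈ R, r = 0 ∨ 0 ≤ ν r) ∧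
    ∀ x : E, (x = 0 ∨ 0 ≤ ν x) →
      ∃! r, r ∈ R ∧ (x - r = 0 ∨ 1 ≤ ν (x - r))
  /-- Hensel: a unit of `O_E` that is a square modulo `p_E` is a square (residue char. odd) -/
  hensel_sq : ∀ u w : E, u ≠ 0 → ν u = 0 → w ≠ 0 → ν w = 0 →
    (w * w - u = 0 ∨ 1 ≤ ν (w * w - u)) → ∃ v : E, v * v = u

namespace Setting

variable {E : Type*} [Field E] (S : Setting E)

/-- `x` lies in the ring of integers `O_E`. -/
def inOE (x : E) : Prop := x = 0 ∨ 0 ≤ S.ν x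

/-- `x` lies in the (fractional, if `d ≤ 0`) ideal `p_E^d`. -/
def inpE (d : ℤ) (x : E) : Prop := x = 0 ∨ d ≤ S.ν x

/-- `x` is a unit of `O_E`. -/
def unitOE (x : E) : Prop := x ≠ 0 ∧ S.ν x = 0

/-- `x` lies in the subfield `F` (the fixed field of `σ`). -/
def inF (x : E) : Prop := S.σ x = x

/-- `x` is a unit of `O_F`. -/
def unitOF (x : E) : Prop := S.σ x = x ∧ x ≠ 0 ∧ S.ν x = 0

/-- `x` lies in `E¹`, i.e. has norm one. -/
def normOne (x : E) : Prop := x * S.σ x = 1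

/-- `x ∈ √ε·F`. -/
def inSqεF (x : E) : Prop := ∃ f : E, S.σ f = f ∧ x = S.sqε * f

/-- Entrywise application of `σ` to a matrix, `ḡ`. -/
def mbar (g : Matrix (Fin 2) (Fin 2) E) : Matrix (Fin 2) (Fin 2) E :=
  Matrix.of fun i j => S.σ (g i j)

/-- The antidiagonal matrix `w = [[0,1],[1,0]]` defining the hermitian form. -/
def wmat (_S : Setting E) : Matrix (Fin 2) (Fin 2) E := !![0, 1; 1, 0]

/-- Membership in `G = U(1,1)(F) = {g : ḡᵀ·w·g = w}`. -/
def inG (g : Matrix (Fin 2) (Fin 2) E) : Prop :=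
  (S.mbar g)ᵀ * S.wmat * g = S.wmat

/-- `G = U(1,1)(F)`, as a set of 2×2 matrices over `E`. -/
def Gset : Set (Matrix (Fin 2) (Fin 2) E) := {g | S.inG g}

/-- `G_der = SU(1,1)(F) = {g ∈ G : det g = 1}`. -/
def Gder : Set (Matrix (Fin 2) (Fin 2) E) := {g | S.inG g ∧ g.det = 1}

/-- The standard maximal compact subgroup `K` of `G` (entries in `O_E`). -/
def Kset : Set (Matrix (Fin 2) (Fin 2) E) := {g | S.inG g ∧ ∀ i j, S.inOE (g i j)}

/-- The congruence subgroup `K_d = {k ∈ K : k − 1 ∈ p_E^d·M₂(O_E)}`. -/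
def Kfil (d : ℤ) : Set (Matrix (Fin 2) (Fin 2) E) :=
  {g | g ∈ S.Kset ∧ ∀ i j, S.inpE d ((g - 1) i j)}

/-- The subgroup `B` of upper triangular matrices in `K`. -/
def Bset : Set (Matrix (Fin 2) (Fin 2) E) := {g | g ∈ S.Kset ∧ g 1 0 = 0}

/-- The subgroup `B^op` of lower triangular matrices in `K`. -/
def Bop : Set (Matrix (Fin 2) (Fin 2) E) := {g | g ∈ S.Kset ∧ g 0 1 = 0}

/-- The center `Z = {z·I : z ∈ E¹}` of `G`. -/
def Zset : Set (Matrix (Fin 2) (Fin 2) E) :=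
  {g | ∃ z : E, S.normOne z ∧ g = z • (1 : Matrix (Fin 2) (Fin 2) E)}

/-- The matrix `α^t = diag(ϖ^{−t}, ϖ^t)`. -/
def αmat (t : ℕ) : Matrix (Fin 2) (Fin 2) E := !![(S.ϖ ^ t)⁻¹, 0; 0, S.ϖ ^ t]

/-- The matrix `η = diag(1, ϖ)` (it normalizes `G`). -/
def ηmat : Matrix (Fin 2) (Fin 2) E := !![1, 0; 0, S.ϖ]

/-- The matrix `η⁻¹ = diag(1, ϖ⁻¹)`. -/
def ηinv : Matrix (Fin 2) (Fin 2) E := !![1, 0; 0, S.ϖ⁻¹]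

/-- The torus `T_{γ₁,γ₂} = {[[a,bγ₁],[bγ₂,a]] : a·ā + b·b̄·γ₁γ₂ = 1, ā·b ∈ √ε·F}`. -/
def Tset (γ₁ γ₂ : E) : Set (Matrix (Fin 2) (Fin 2) E) :=
  {g | ∃ a b : E, g = !![a, b * γ₁; b * γ₂, a] ∧
    a * S.σ a + b * S.σ b * (γ₁ * γ₂) = 1 ∧ S.inSqεF (S.σ a * b)}

/-- The Moy–Prasad filtration subgroup `G_{y,r}` of `G` (for `r > 0`). -/
def Gfil (y r : ℚ) : Set (Matrix (Fin 2) (Fin 2) E) :=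
  {g | S.inG g ∧ S.inpE ⌈r⌉ (g 0 0 - 1) ∧ S.inpE ⌈r⌉ (g 1 1 - 1) ∧
    S.inpE ⌈r - y⌉ (g 0 1) ∧ S.inpE ⌈r + y⌉ (g 1 0)}

/-- `G_{y,0+} = ⋃_{r>0} G_{y,r}`. -/
def Gfil0plus (y : ℚ) : Set (Matrix (Fin 2) (Fin 2) E) :=
  {g | ∃ r : ℚ, 0 < r ∧ g ∈ S.Gfil y r}

end Setting


namespace Setting

variable {E : Type*} [Field E] (S : Setting E)

lemma nu_one : S.ν 1 = 0 := by
  have h := S.ν_mul (x := (1:E)) (y := (1:E)) one_ne_zero one_ne_zero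
  rw [mul_one] at h; omega

lemma nu_neg {x : E} (hx : x ≠ 0) : S.ν (-x) = S.ν x := by
  have h1 : S.ν (-1 : E) = 0 := by
    have h := S.ν_mul (x := (-1:E)) (y := (-1:E)) (by norm_num) (by norm_num)
    rw [neg_mul_neg, one_mul] at h
    have := S.nu_one; omega
  have h := S.ν_mul (x := (-1:E)) (y := x) (by norm_num) hx
  rw [neg_one_mul] at h; omega

lemma nu_inv {x : E} (hx : x ≠ 0) : S.ν x⁻¹ = -S.ν x := by
  have h := S.ν_mul (x := x) (y := x⁻¹) hx (inv_ne_zero hx)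
  rw [mul_inv_cancel₀ hx] at h
  have := S.nu_one; omega

lemma nu_pow (n : ℕ) : S.ν (S.ϖ ^ n) = n := by
  induction n with
  | zero => simpa using S.nu_one
  | succ m ih =>
    have h := S.ν_mul (x := S.ϖ ^ m) (y := S.ϖ) (pow_ne_zero _ S.ϖ_ne_zero) S.ϖ_ne_zero
    rw [← pow_succ] at h
    rw [h, ih, S.ν_ϖ]; push_cast; ring

lemma sigma_ne_zero {x : E} (hx : x ≠ 0) : S.σ x ≠ 0 := fun h => hx (S.σ.injective (by rw [h, map_zero]))

lemma inpE_mono {d d' : ℤ} (h : d' ≤ d) {x : E} (hx : S.inpE d x) : S.inpE d' x :=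
  hx.imp id fun h2 => le_trans h h2

lemma inpE_neg {d : ℤ} {x : E} (hx : S.inpE d x) : S.inpE d (-x) := by
  by_cases h0 : x = 0
  · exact Or.inl (by rw [h0, neg_zero])
  · rcases hx with h | h
    · exact absurd h h0
    · exact Or.inr (by rw [S.nu_neg h0]; exact h)

lemma inpE_sigma {d : ℤ} {x : E} (hx : S.inpE d x) : S.inpE d (S.σ x) := by
  by_cases h0 : x = 0
  · exact Or.inl (by rw [h0, map_zero])
  · rcases hx with h | h
    · exact absurd h h0
    · exact Or.inr (by rw [S.ν_σ]; exact h)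

lemma inpE_add {d : ℤ} {x y : E} (hx : S.inpE d x) (hy : S.inpE d y) :
    S.inpE d (x + y) := by
  by_cases h0 : x = 0
  · simpa [h0] using hy
  by_cases h1 : y = 0
  · simpa [h1] using hx
  by_cases h2 : x + y = 0
  · exact Or.inl h2
  rcases hx with h | hx; · exact absurd h h0
  rcases hy with h | hy; · exact absurd h h1
  exact Or.inr (le_trans (le_min hx hy) (S.ν_add h0 h1 h2))

lemma inpE_sub {d : ℤ} {x y : E} (hx : S.inpE d x) (hy : S.inpE d y) :
    S.inpE d (x - y) := by
  rw [sub_eq_add_neg]; exact S.inpE_add hx (S.inpE_neg hy)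

lemma inpE_mul {d e : ℤ} {x y : E} (hx : S.inpE d x) (hy : S.inpE e y) :
    S.inpE (d + e) (x * y) := by
  by_cases h0 : x = 0
  · exact Or.inl (by rw [h0, zero_mul])
  by_cases h1 : y = 0
  · exact Or.inl (by rw [h1, mul_zero])
  rcases hx with h | hx; · exact absurd h h0
  rcases hy with h | hy; · exact absurd h h1
  exact Or.inr (by rw [S.ν_mul h0 h1]; exact add_le_add hx hy)

lemma unit_inOE {u : E} (hu : S.unitOE u) : S.inOE u := Or.inr (le_of_eq hu.2.symm)

lemma unit_inpE0 {u : E} (hu : S.unitOE u) : S.inpE 0 u := Or.inr (le_of_eq hu.2.symm)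

lemma unit_inv {u : E} (hu : S.unitOE u) : S.unitOE u⁻¹ :=
  ⟨inv_ne_zero hu.1, by rw [S.nu_inv hu.1, hu.2]; ring⟩

lemma inpE_mul_unit {d : ℤ} {x u : E} (hx : S.inpE d x) (hu : S.unitOE u) :
    S.inpE d (x * u) := by
  have h := S.inpE_mul hx (S.unit_inpE0 hu)
  rwa [add_zero] at h

lemma unit_add_small {x t : E} (hx : S.unitOE x) (ht : S.inpE 1 t) : S.unitOE (x + t) := by
  by_cases h0 : t = 0
  · simpa [h0] using hx
  rcases ht with h | ht; · exact absurd h h0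
  have hne : x + t ≠ 0 := by
    intro h
    have : t = -x := by linear_combination h
    rw [this, S.nu_neg hx.1, hx.2] at ht; omega
  refine ⟨hne, ?_⟩
  have h1 : (0:ℤ) ≤ S.ν (x + t) :=
    le_trans (le_min (le_of_eq hx.2.symm) (by omega)) (S.ν_add hx.1 h0 hne)
  have h2 : S.ν (x + t) ≤ 0 := by
    have hxx : x + t + -t = x := by ring
    have h := S.ν_add hne (neg_ne_zero.mpr h0) (by rw [hxx]; exact hx.1)
    rw [hxx, hx.2, S.nu_neg h0] at h
    omega
  omega

lemma two_ne_zero'' (S : Setting E) : (2:E) ≠ 0 := by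
  intro h
  apply S.σ_ne_id
  have hneg : -S.sqε = S.sqε := by
    have h2 : S.sqε + S.sqε = 0 := by
      have : (2:E) * S.sqε = 0 := by rw [h, zero_mul]
      linear_combination this
    linear_combination -h2
  ext x
  obtain ⟨a, b, ha, hb, rfl⟩ := S.generates x
  rw [map_add, _root_.map_mul, ha, hb, S.sqε_conj, hneg, RingHom.id_apply]

lemma sigma_two : S.σ 2 = 2 := by
  rw [show (2:E) = 1 + 1 by norm_num, map_add, _root_.map_one]

lemma nu_two : S.ν 2 = 0 := by
  classical
  have h2 := S.two_ne_zero''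
  by_contra hne
  have h1 : (1:ℤ) ≤ S.ν 2 := by
    have h := S.ν_add (x := (1:E)) (y := (1:E)) one_ne_zero one_ne_zero
      (by rw [one_add_one_eq_two]; exact h2)
    rw [one_add_one_eq_two, S.nu_one] at h
    omega
  obtain ⟨R, hcard, hmem, huniq⟩ := S.residue_F
  have hrep : ∀ r : {r : E // r ∈ R}, ∃! r' : E, r' ∈ R ∧
      ((r.1 + 1) - r' = 0 ∨ 1 ≤ S.ν ((r.1 + 1) - r')) := fun r =>
    huniq _ (by rw [map_add, _root_.map_one, (hmem r.1 r.2).1])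
      (S.inpE_add ((hmem r.1 r.2).2) (Or.inr (le_of_eq S.nu_one.symm)))
  let f : {r : E // r ∈ R} → {r : E // r ∈ R} := fun r =>
    ⟨(hrep r).exists.choose, (hrep r).exists.choose_spec.1⟩
  have hfspec : ∀ r, ((r.1 + 1) - (f r).1 = 0 ∨ 1 ≤ S.ν ((r.1 + 1) - (f r).1)) := fun r =>
    (hrep r).exists.choose_spec.2
  have hinv : Function.Involutive f := by
    intro r
    have hdiff : S.inpE 1 (((f r).1 + 1) - r.1) := by
      have heq : ((f r).1 + 1) - r.1 = 2 - ((r.1 + 1) - (f r).1) := by ring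
      rw [heq]
      exact S.inpE_sub (Or.inr h1) (hfspec r)
    have hu := (hrep (f r)).unique ⟨(f (f r)).2, hfspec (f r)⟩ ⟨r.2, hdiff⟩
    exact Subtype.ext hu
  have hnofix : ∀ r, f r ≠ r := by
    intro r hfix
    have h := hfspec r
    rw [hfix] at h
    have heq : (r.1 + 1) - r.1 = 1 := by ring
    rw [heq] at h
    rcases h with h | h
    · exact one_ne_zero h
    · rw [S.nu_one] at h; omega
  haveI : Fact (Nat.Prime 2) := ⟨Nat.prime_two⟩
  have hodd : ¬ (2 ∣ Fintype.card {r : E // r ∈ R}) := by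
    rw [Fintype.card_coe, hcard]
    intro hdvd
    exact (Nat.not_even_iff_odd.mpr S.q_odd) (even_iff_two_dvd.mpr hdvd)
  have hpow : hinv.toPerm ^ (2:ℕ) ^ (1:ℕ) = 1 := by
    ext x
    simp [pow_succ, pow_zero, Equiv.Perm.mul_apply, hinv x]
  obtain ⟨a, ha⟩ := Equiv.Perm.exists_fixed_point_of_prime hodd hpow
  exact hnofix a (by simpa using ha)

lemma fin_two_eq_iff {α : Type*} (a b c e A B C D : α) :
    !![a,b;c,e] = !![A,B;C,D] ↔ (a = A ∧ b = B ∧ c = C ∧ e = D) := by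
  rw [← Matrix.ext_iff]
  simp [Fin.forall_fin_two]
  tauto

lemma mbar_mul (g h : Matrix (Fin 2) (Fin 2) E) : S.mbar (g * h) = S.mbar g * S.mbar h := by
  ext i j
  simp [Setting.mbar, Matrix.mul_apply, map_sum, _root_.map_mul]

lemma inG_mul {b k : Matrix (Fin 2) (Fin 2) E} (hb : S.inG b) (hk : S.inG k) :
    S.inG (b * k) := by
  unfold Setting.inG at *
  rw [S.mbar_mul, Matrix.transpose_mul]
  calc (S.mbar k)ᵀ * (S.mbar b)ᵀ * S.wmat * (b * k)
      = (S.mbar k)ᵀ * ((S.mbar b)ᵀ * S.wmat * b) * k := by simp only [Matrix.mul_assoc]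
    _ = (S.mbar k)ᵀ * S.wmat * k := by rw [hb]
    _ = S.wmat := hk

lemma inG_of_inG_mul {b k : Matrix (Fin 2) (Fin 2) E} (hb : S.inG b) (hbk : S.inG (b * k)) :
    S.inG k := by
  unfold Setting.inG at *
  rw [S.mbar_mul, Matrix.transpose_mul] at hbk
  calc (S.mbar k)ᵀ * S.wmat * k
      = (S.mbar k)ᵀ * ((S.mbar b)ᵀ * S.wmat * b) * k := by rw [hb]
    _ = (S.mbar k)ᵀ * (S.mbar b)ᵀ * S.wmat * (b * k) := by simp only [Matrix.mul_assoc]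
    _ = S.wmat := hbk

lemma mbar_fin_two (a b c e : E) :
    S.mbar !![a, b; c, e] = !![S.σ a, S.σ b; S.σ c, S.σ e] := by
  ext i j
  fin_cases i <;> fin_cases j <;> simp [Setting.mbar]

lemma inG_iff (a b c e : E) :
    S.inG !![a, b; c, e] ↔
      (S.σ c * a + S.σ a * c = 0 ∧ S.σ c * b + S.σ a * e = 1 ∧
       S.σ e * a + S.σ b * c = 1 ∧ S.σ e * b + S.σ b * e = 0) := by
  have ht : (!![S.σ a, S.σ b; S.σ c, S.σ e])ᵀ = !![S.σ a, S.σ c; S.σ b, S.σ e] := by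
    ext i j
    fin_cases i <;> fin_cases j <;> simp
  rw [Setting.inG, S.mbar_fin_two, Setting.wmat, ht, Matrix.mul_fin_two, Matrix.mul_fin_two,
    fin_two_eq_iff]
  constructor <;> rintro ⟨h1, h2, h3, h4⟩ <;>
    exact ⟨by linear_combination h1, by linear_combination h2, by linear_combination h3,
      by linear_combination h4⟩

lemma eta_pow (n : ℕ) : S.ηmat ^ n = !![1, 0; 0, S.ϖ ^ n] := by
  induction n with
  | zero => simp [Matrix.one_fin_two]
  | succ m ih =>
    rw [pow_succ, ih, Setting.ηmat, Matrix.mul_fin_two, pow_succ]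
    congr 1 <;> ring

lemma etainv_pow (n : ℕ) : S.ηinv ^ n = !![1, 0; 0, (S.ϖ ^ n)⁻¹] := by
  induction n with
  | zero => simp [Matrix.one_fin_two]
  | succ m ih =>
    rw [pow_succ, ih, Setting.ηinv, Matrix.mul_fin_two, pow_succ, mul_inv]
    congr 1 <;> ring

end Setting

/-- For every integer `d > 0`, `K ∩ η^d·K·η^{−d} = B·K_d`, where `B` is
the subgroup of upper triangular matrices in `K`. -/
theorem statement8 {E : Type*} [Field E] (S : Setting E) (d : ℕ) (hd : 0 < d) :
    S.Kset ∩ ((fun k => S.ηmat ^ d * k * S.ηinv ^ d) '' S.Kset) = S.Bset * S.Kfil d := by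
  have hd1 : (1:ℤ) ≤ (d:ℤ) := by exact_mod_cast hd
  have hd0 : (0:ℤ) ≤ (d:ℤ) := by positivity
  have hϖd : S.ϖ ^ d ≠ 0 := pow_ne_zero _ S.ϖ_ne_zero
  have hϖdp : S.inpE (d:ℤ) (S.ϖ ^ d) := Or.inr (le_of_eq (S.nu_pow d).symm)
  have hϖdinv : S.inpE (-(d:ℤ)) ((S.ϖ ^ d)⁻¹) :=
    Or.inr (le_of_eq (by rw [S.nu_inv hϖd, S.nu_pow]))
  have hσϖd : S.σ ((S.ϖ ^ d)⁻¹) = (S.ϖ ^ d)⁻¹ := by rw [map_inv₀, map_pow, S.ϖ_fixed]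
  have hσϖd' : S.σ (S.ϖ ^ d) = S.ϖ ^ d := by rw [map_pow, S.ϖ_fixed]
  have hinvϖ : (S.ϖ ^ d)⁻¹ * S.ϖ ^ d = 1 := inv_mul_cancel₀ hϖd
  have hone : S.inOE (1:E) := Or.inr (le_of_eq S.nu_one.symm)
  have hO_of_near : ∀ x : E, S.inpE (d:ℤ) (x - 1) → S.inOE x := by
    intro x hx
    have heq : x = 1 + (x - 1) := by ring
    rw [heq]
    exact S.inpE_add hone (S.inpE_mono hd0 hx)
  ext g
  simp only [Set.mem_inter_iff, Set.mem_image, Set.mem_mul]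
  constructor
  · rintro ⟨hgK, k0, hk0, hconj⟩
    have hconj' : S.ηmat ^ d * k0 * S.ηinv ^ d = g := hconj
    have hc : S.inpE (d:ℤ) (g 1 0) := by
      have h10 : g 1 0 = S.ϖ ^ d * k0 1 0 := by
        rw [← hconj', S.eta_pow, S.etainv_pow, Matrix.eta_fin_two k0, Matrix.mul_fin_two,
          Matrix.mul_fin_two]
        norm_num
      rw [h10]
      have h := S.inpE_mul hϖdp (hk0.2 1 0)
      rwa [add_zero] at h
    have hg : g = !![g 0 0, g 0 1; g 1 0, g 1 1] := Matrix.eta_fin_two g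
    obtain ⟨h1, h2, h3, h4⟩ := (S.inG_iff (g 0 0) (g 0 1) (g 1 0) (g 1 1)).mp
      (by rw [← hg]; exact hgK.1)
    have haO := hgK.2 0 0
    have hbO := hgK.2 0 1
    have heO := hgK.2 1 1
    have hgG := hgK.1
    set a := g 0 0 with ha_def
    set b := g 0 1 with hb_def
    set c := g 1 0 with hc_def
    set e := g 1 1 with he_def
    have hae : e * S.σ a - 1 = -(b * S.σ c) := by
      have h := congrArg S.σ h3
      rw [map_add, _root_.map_mul, _root_.map_mul, _root_.map_one, S.σσ, S.σσ] at h
      linear_combination h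
    have hσc : S.inpE (d:ℤ) (S.σ c) := S.inpE_sigma hc
    have hsmall : S.inpE (d:ℤ) (e * S.σ a - 1) := by
      rw [hae]
      refine S.inpE_neg ?_
      have h := S.inpE_mul hbO hσc
      rwa [zero_add] at h
    have hunit : S.unitOE (e * S.σ a) := by
      have heq : e * S.σ a = 1 + (e * S.σ a - 1) := by ring
      rw [heq]
      exact S.unit_add_small ⟨one_ne_zero, S.nu_one⟩ (S.inpE_mono hd1 hsmall)
    have he0 : e ≠ 0 := fun h => hunit.1 (by rw [h, zero_mul])
    have hσa0 : S.σ a ≠ 0 := fun h => hunit.1 (by rw [h, mul_zero])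
    have ha0 : a ≠ 0 := fun h => hσa0 (by rw [h, map_zero])
    have hνae := S.ν_mul he0 hσa0
    rw [hunit.2] at hνae
    have hνa : S.ν a = 0 ∧ S.ν e = 0 := by
      have hea : 0 ≤ S.ν e := by
        rcases heO with h | h
        · exact absurd h he0
        · exact h
      have haa : 0 ≤ S.ν a := by
        rcases haO with h | h
        · exact absurd h ha0
        · exact h
      have hσ := S.ν_σ a
      omega
    have hua : S.unitOE a := ⟨ha0, hνa.1⟩
    have huσa : S.unitOE (S.σ a) := ⟨hσa0, by rw [S.ν_σ]; exact hνa.1⟩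
    have hae2 : a * S.σ e - 1 = -(S.σ b * c) := by linear_combination h3
    have hid : e * (S.σ a * b + a * S.σ b) = b * (S.σ b * c - b * S.σ c) := by
      linear_combination b * hae - b * hae2 + a * h4
    have hbe : S.inOE (b * e⁻¹) := by
      by_cases hb0 : b = 0
      · exact Or.inl (by rw [hb0, zero_mul])
      · refine Or.inr ?_
        rw [S.ν_mul hb0 (inv_ne_zero he0), S.nu_inv he0, hνa.2]
        rcases hbO with h | h
        · exact absurd h hb0
        · omega
    have hτ : S.inpE (d:ℤ) (S.σ a * b + a * S.σ b) := by
      have heq : S.σ a * b + a * S.σ b = (b * e⁻¹) * (S.σ b * c - b * S.σ c) := by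
        field_simp
        linear_combination hid
      rw [heq]
      have hdiff : S.inpE (d:ℤ) (S.σ b * c - b * S.σ c) := by
        refine S.inpE_sub ?_ ?_
        · have h := S.inpE_mul (S.inpE_sigma hbO) hc
          rwa [zero_add] at h
        · have h := S.inpE_mul hbO hσc
          rwa [zero_add] at h
      have h := S.inpE_mul hbe hdiff
      rwa [zero_add] at h
    have h2u : S.unitOE (2:E) := ⟨S.two_ne_zero'', S.nu_two⟩
    set α : E := (S.σ a * b + a * S.σ b) / 2 with hα_def
    have hα : S.inpE (d:ℤ) α := by
      rw [hα_def, div_eq_mul_inv]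
      exact S.inpE_mul_unit hτ (S.unit_inv h2u)
    have hασ : S.σ α = α := by
      rw [hα_def, map_div₀, S.sigma_two, map_add, _root_.map_mul, _root_.map_mul, S.σσ, S.σσ]
      ring_nf
    set b' : E := b - α * (S.σ a)⁻¹ with hb'_def
    have hσb' : S.σ b' = S.σ b - α * a⁻¹ := by
      rw [hb'_def, map_sub, _root_.map_mul, hασ, map_inv₀, S.σσ]
    have h2α : 2 * α = S.σ a * b + a * S.σ b := by
      rw [hα_def, mul_div_cancel₀ _ S.two_ne_zero'']
    have hkey : S.σ a * b' + a * S.σ b' = 0 := by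
      rw [hσb', hb'_def]
      have e1 : S.σ a * (α * (S.σ a)⁻¹) = α := by field_simp
      have e2 : a * (α * a⁻¹) = α := by field_simp
      linear_combination -e1 - e2 - h2α
    have hbb' : S.inpE (d:ℤ) (b - b') := by
      have heq : b - b' = α * (S.σ a)⁻¹ := by rw [hb'_def]; ring
      rw [heq]
      exact S.inpE_mul_unit hα (S.unit_inv huσa)
    have hb'O : S.inOE b' := by
      have heq : b' = b - (b - b') := by ring
      rw [heq]
      exact S.inpE_sub hbO (S.inpE_mono hd0 hbb')
    have hX : S.inpE (d:ℤ) (b' * S.σ a * c * a⁻¹) := by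
      have h := S.inpE_mul_unit (S.inpE_mul (S.inpE_mul hb'O (S.unit_inpE0 huσa)) hc)
        (S.unit_inv hua)
      simpa using h
    have hk00d : S.inpE (d:ℤ) ((1 - b' * S.σ a * c * a⁻¹) - 1) := by
      have heq : (1 - b' * S.σ a * c * a⁻¹) - 1 = -(b' * S.σ a * c * a⁻¹) := by ring
      rw [heq]
      exact S.inpE_neg hX
    have hk01d : S.inpE (d:ℤ) ((b - b' * S.σ a * e) * a⁻¹) := by
      have h := S.inpE_add hbb' (S.inpE_neg (by simpa using S.inpE_mul hb'O hsmall))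
      have heq : b - b' * S.σ a * e = (b - b') + (-(b' * (e * S.σ a - 1))) := by ring
      rw [heq]
      exact S.inpE_mul_unit h (S.unit_inv hua)
    have hk10d : S.inpE (d:ℤ) (S.σ a * c) := by
      simpa using S.inpE_mul (S.unit_inpE0 huσa) hc
    have hk11d : S.inpE (d:ℤ) (S.σ a * e - 1) := by
      have heq : S.σ a * e - 1 = e * S.σ a - 1 := by ring
      rw [heq]
      exact hsmall
    set b0 : Matrix (Fin 2) (Fin 2) E := !![a, b'; 0, (S.σ a)⁻¹] with hb0_def
    set k : Matrix (Fin 2) (Fin 2) E :=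
      !![1 - b' * S.σ a * c * a⁻¹, (b - b' * S.σ a * e) * a⁻¹; S.σ a * c, S.σ a * e] with hk_def
    have hfact : b0 * k = g := by
      rw [hg, hb0_def, hk_def, Matrix.mul_fin_two, Setting.fin_two_eq_iff]
      refine ⟨?_, ?_, ?_, ?_⟩ <;> field_simp <;> ring
    have hb0G : S.inG b0 := by
      rw [hb0_def, S.inG_iff]
      refine ⟨by rw [map_zero]; ring, ?_, ?_, ?_⟩
      · rw [map_zero]
        field_simp
        ring
      · rw [map_inv₀, S.σσ]
        field_simp
        ring
      · rw [map_inv₀, S.σσ]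
        field_simp
        linear_combination hkey
    have hkG : S.inG k := S.inG_of_inG_mul hb0G (by rw [hfact]; exact hgG)
    refine ⟨b0, ⟨⟨hb0G, ?_⟩, ?_⟩, k, ⟨⟨hkG, ?_⟩, ?_⟩, hfact⟩
    · intro i j
      rw [hb0_def]
      fin_cases i <;> fin_cases j <;> simp
      · exact haO
      · exact hb'O
      · exact Or.inl rfl
      · exact S.unit_inOE (S.unit_inv huσa)
    · rw [hb0_def]; simp
    · intro i j
      rw [hk_def]
      fin_cases i <;> fin_cases j <;> simp
      · exact hO_of_near _ hk00d
      · exact S.inpE_mono hd0 hk01d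
      · exact S.inpE_mono hd0 hk10d
      · exact hO_of_near _ hk11d
    · intro i j
      have hsub : (k - 1) i j = k i j - (1 : Matrix (Fin 2) (Fin 2) E) i j := by
        simp [Matrix.sub_apply]
      rw [hsub, hk_def]
      fin_cases i <;> fin_cases j <;> simp [Matrix.one_apply]
      · have heq : -(b' * S.σ a * c * a⁻¹) = 1 - b' * S.σ a * c * a⁻¹ - 1 := by ring
        rw [heq]
        exact hk00d
      · exact hk01d
      · exact hk10d
      · exact hk11d
  · rintro ⟨B, hB, k, hk, rfl⟩
    obtain ⟨⟨hBG, hBO⟩, hB10⟩ := hB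
    obtain ⟨⟨hkG, hkO⟩, hkfil⟩ := hk
    have hprodO : ∀ i j, S.inOE ((B * k) i j) := by
      intro i j
      rw [Matrix.mul_apply, Fin.sum_univ_two]
      refine S.inpE_add ?_ ?_
      · have h := S.inpE_mul (hBO i 0) (hkO 0 j)
        rwa [zero_add] at h
      · have h := S.inpE_mul (hBO i 1) (hkO 1 j)
        rwa [zero_add] at h
    have hGK : B * k ∈ S.Kset := ⟨S.inG_mul hBG hkG, hprodO⟩
    refine ⟨hGK, ?_⟩
    have hk10 : S.inpE (d:ℤ) (k 1 0) := by
      have h := hkfil 1 0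
      simpa [Matrix.sub_apply, Matrix.one_apply] using h
    have hg10 : S.inpE (d:ℤ) ((B * k) 1 0) := by
      have heq : (B * k) 1 0 = B 1 1 * k 1 0 := by
        rw [Matrix.mul_apply, Fin.sum_univ_two, hB10]
        ring
      rw [heq]
      simpa using S.inpE_mul (hBO 1 1) hk10
    obtain ⟨h1, h2, h3, h4⟩ := (S.inG_iff ((B*k) 0 0) ((B*k) 0 1) ((B*k) 1 0) ((B*k) 1 1)).mp
      (by rw [← Matrix.eta_fin_two (B*k)]; exact hGK.1)
    refine ⟨!![(B*k) 0 0, (B*k) 0 1 * S.ϖ^d; (B*k) 1 0 * (S.ϖ^d)⁻¹, (B*k) 1 1],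
      ⟨?_, ?_⟩, ?_⟩
    · rw [S.inG_iff]
      refine ⟨?_, ?_, ?_, ?_⟩
      · rw [_root_.map_mul, hσϖd]
        linear_combination (S.ϖ^d)⁻¹ * h1
      · rw [_root_.map_mul, hσϖd]
        linear_combination h2 + S.σ ((B*k) 1 0) * ((B*k) 0 1) * hinvϖ
      · rw [_root_.map_mul, hσϖd']
        linear_combination h3 + S.σ ((B*k) 0 1) * ((B*k) 1 0) * hinvϖ
      · rw [_root_.map_mul, hσϖd']
        linear_combination S.ϖ^d * h4
    · intro i j
      fin_cases i <;> fin_cases j <;> simp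
      · exact hprodO 0 0
      · exact S.inpE_mono hd0 (by simpa using S.inpE_mul ((hprodO 0 1)) hϖdp)
      · have h := S.inpE_mul hg10 hϖdinv
        rw [add_neg_cancel] at h
        exact h
      · exact hprodO 1 1
    · rw [S.eta_pow, S.etainv_pow, Matrix.mul_fin_two, Matrix.mul_fin_two]
      conv_rhs => rw [Matrix.eta_fin_two (B*k)]
      rw [Setting.fin_two_eq_iff]
      refine ⟨by ring, ?_, ?_, ?_⟩ <;> field_simp [S.ϖ_ne_zero] <;> ring
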